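/- Let φ_{d,γ} denote the density of the d-dimensional centered Gaussian with covariance γ·I. There exists a constant C < ∞ (depending only on d) such that for all 0 < γ̃ ≤ γ and all z ∈ ℝ^d: |γ^{−1}φ_{d,γ}(z) − γ̃^{−1}φ_{d,γ̃}(z)| ≤ C · (γ/γ̃)^{d/2} · ((γ − γ̃)/γ̃²) · (1 + ‖z‖²/γ) · φ_{d,γ}(z). -/

import Mathlib

open Real

/-- Density of the `d`-dimensional centered Gaussian distribution with covariance `γ • I`. -/
noncomputable def gaussDensity (d : ℕ) (γ : ℝ) (z : EuclideanSpace ℝ (Fin d)) : ℝ :=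
  (2 * π * γ) ^ (-(d : ℝ) / 2) * Real.exp (-‖z‖ ^ 2 / (2 * γ))

/-- `x * exp (-x) ≤ 1` for `0 ≤ x`. -/
lemma aux_mul_exp_neg_le_one {x : ℝ} (hx : 0 ≤ x) : x * Real.exp (-x) ≤ 1 := by
  rw [Real.exp_neg, mul_inv_le_iff₀ (Real.exp_pos x)]
  nlinarith [Real.add_one_le_exp x]

/-- key scalar bound: `u * exp (-u) ≤ (1 + v) * exp (-v)` for `0 ≤ v ≤ u`. -/
lemma aux_key {u v : ℝ} (hv : 0 ≤ v) (huv : v ≤ u) :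
    u * Real.exp (-u) ≤ (1 + v) * Real.exp (-v) := by
  have h1 : (u - v) * Real.exp (-(u - v)) ≤ 1 := aux_mul_exp_neg_le_one (by linarith)
  have h2 : Real.exp (-(u - v)) ≤ 1 := Real.exp_le_one_iff.mpr (by linarith)
  have h3 : Real.exp (-u) = Real.exp (-(u - v)) * Real.exp (-v) := by
    rw [← Real.exp_add]; ring_nf
  have hev : (0:ℝ) < Real.exp (-v) := Real.exp_pos _
  calc u * Real.exp (-u) = ((u - v) * Real.exp (-(u - v)) + v * Real.exp (-(u - v)))
        * Real.exp (-v) := by rw [h3]; ring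
    _ ≤ (1 + v * 1) * Real.exp (-v) := by
        have : v * Real.exp (-(u - v)) ≤ v * 1 := by
          apply mul_le_mul_of_nonneg_left h2 hv
        nlinarith
    _ = (1 + v) * Real.exp (-v) := by ring

theorem stmt5 (d : ℕ) :
    ∃ C : ℝ, ∀ γ γt : ℝ, 0 < γt → γt ≤ γ → ∀ z : EuclideanSpace ℝ (Fin d),
      |γ⁻¹ * gaussDensity d γ z - γt⁻¹ * gaussDensity d γt z| ≤
        C * (γ / γt) ^ ((d : ℝ) / 2) * ((γ - γt) / γt ^ 2) * (1 + ‖z‖ ^ 2 / γ) *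
          gaussDensity d γ z := by
  refine ⟨(d : ℝ) / 2 + 2, fun γ γt hγt hle z => ?_⟩
  have hγ : 0 < γ := lt_of_lt_of_le hγt hle
  set r : ℝ := ‖z‖ ^ 2 with hrdef
  have hr0 : 0 ≤ r := sq_nonneg _
  set p : ℝ := (d : ℝ) / 2 with hp
  have hp0 : 0 ≤ p := by positivity
  set c : ℝ := (2 * π) ^ (-p) with hc
  have hcpos : 0 < c := rpow_pos_of_pos (by positivity) _
  set g : ℝ → ℝ := fun s => c * s ^ (-p - 1) * Real.exp (-r / (2 * s)) with hg
  set g' : ℝ → ℝ := fun s =>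
    c * ((-p - 1) * s ^ (-p - 1 - 1)) * Real.exp (-r / (2 * s)) +
      c * s ^ (-p - 1) * (Real.exp (-r / (2 * s)) * (r / 2 * (s ^ 2)⁻¹)) with hg'
  -- g equals γ⁻¹ * gaussDensity on positive reals
  have hgeq : ∀ s : ℝ, 0 < s → s⁻¹ * gaussDensity d s z = g s := by
    intro s hs
    have h1 : (2 * π * s) ^ (-(d : ℝ) / 2) = c * s ^ (-p) := by
      rw [hc, neg_div, ← hp, Real.mul_rpow (by positivity) hs.le]
    have h2 : s ^ (-p - 1) = s ^ (-p) * s⁻¹ := by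
      rw [Real.rpow_sub hs, Real.rpow_one, div_eq_mul_inv]
    rw [gaussDensity, h1, hg]
    simp only [h2, ← hrdef]
    ring
  have hIcc : ∀ s ∈ Set.Icc γt γ, 0 < s := fun s hs => lt_of_lt_of_le hγt hs.1
  -- the derivative of g
  have hderiv : ∀ s ∈ Set.Icc γt γ, HasDerivAt g (g' s) s := by
    intro s hsm
    have hs : 0 < s := hIcc s hsm
    have hrpow : HasDerivAt (fun x : ℝ => x ^ (-p - 1)) ((-p - 1) * s ^ (-p - 1 - 1)) s :=
      Real.hasDerivAt_rpow_const (Or.inl hs.ne')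
    have hfun : (fun x : ℝ => -r / (2 * x)) = fun x : ℝ => -r / 2 * x⁻¹ := by
      funext x; ring
    have hinner : HasDerivAt (fun x : ℝ => -r / (2 * x)) (r / 2 * (s ^ 2)⁻¹) s := by
      rw [hfun]
      have h1 := (hasDerivAt_inv hs.ne').const_mul (-r / 2)
      refine h1.congr_deriv ?_
      ring
    exact (hrpow.const_mul c).mul hinner.exp
  -- the Lipschitz constant
  set E : ℝ := Real.exp (-r / (2 * γ)) with hE
  have hEpos : 0 < E := Real.exp_pos _
  set D : ℝ := gaussDensity d γ z with hD
  have hDval : D = (2 * π * γ) ^ (-p) * E := by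
    rw [hD, gaussDensity, neg_div, hp]
  have hDpos : 0 < D := by
    rw [hDval]; positivity
  set K : ℝ := (p + 2) * (γ / γt) ^ p * (1 / γt ^ 2) * (1 + r / γ) * D with hK
  -- key algebraic identity
  have hIdent : (γ / γt) ^ p * (1 / γt ^ 2) * D = c * γt ^ (-p - 2) * E := by
    have h1 : (γ / γt) ^ p = γ ^ p / γt ^ p := Real.div_rpow hγ.le hγt.le p
    have h2 : (2 * π * γ) ^ (-p) = c * γ ^ (-p) :=
      Real.mul_rpow (by positivity) hγ.le
    have h3 : γ ^ (-p) = (γ ^ p)⁻¹ := Real.rpow_neg hγ.le p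
    have h4 : γt ^ (-p - 2) = γt ^ (-p) / γt ^ (2 : ℕ) := by
      rw [show (-p - 2 : ℝ) = -p - ((2:ℕ):ℝ) by norm_num,
        Real.rpow_sub hγt, Real.rpow_natCast]
    have h5 : γt ^ (-p) = (γt ^ p)⁻¹ := Real.rpow_neg hγt.le p
    have hγp : (0:ℝ) < γ ^ p := Real.rpow_pos_of_pos hγ p
    have hγtp : (0:ℝ) < γt ^ p := Real.rpow_pos_of_pos hγt p
    rw [hDval, h1, h2, h3, h4, h5]
    field_simp
  -- bound on the derivative
  have hbound : ∀ s ∈ Set.Icc γt γ, ‖g' s‖ ≤ K := by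
    intro s hsm
    have hs : 0 < s := hIcc s hsm
    have hsγ : s ≤ γ := hsm.2
    have hγts : γt ≤ s := hsm.1
    have hB1 : s ^ (-p - 2) ≤ γt ^ (-p - 2) :=
      Real.rpow_le_rpow_of_nonpos hγt hγts (by linarith)
    have hB2 : Real.exp (-r / (2 * s)) ≤ E := by
      rw [hE]
      apply Real.exp_le_exp.mpr
      rw [neg_div, neg_div, neg_le_neg_iff]
      gcongr
    -- first summand
    have hT1 : |c * ((-p - 1) * s ^ (-p - 1 - 1)) * Real.exp (-r / (2 * s))|
        ≤ c * (p + 1) * (γt ^ (-p - 2) * E) := by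
      have hsp : (0:ℝ) ≤ s ^ (-p - 1 - 1) := (Real.rpow_pos_of_pos hs _).le
      have habs : |c * ((-p - 1) * s ^ (-p - 1 - 1)) * Real.exp (-r / (2 * s))|
          = c * (p + 1) * (s ^ (-p - 2) * Real.exp (-r / (2 * s))) := by
        rw [abs_mul, abs_mul, abs_mul, abs_of_pos hcpos, abs_of_pos (Real.exp_pos _),
          abs_of_nonneg hsp, abs_of_nonpos (show -p - 1 ≤ 0 by linarith),
          show -p - 1 - 1 = -p - 2 by ring]
        ring
      rw [habs]
      have hmm := mul_le_mul hB1 hB2 (Real.exp_pos _).le (Real.rpow_pos_of_pos hγt _).le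
      exact mul_le_mul_of_nonneg_left hmm (by positivity)
    -- second summand
    have hT2 : c * s ^ (-p - 1) * (Real.exp (-r / (2 * s)) * (r / 2 * (s ^ 2)⁻¹))
        ≤ c * γt ^ (-p - 2) * ((1 + r / γ) * E) := by
      have hkey : r / (2 * s) * Real.exp (-(r / (2 * s)))
          ≤ (1 + r / (2 * γ)) * Real.exp (-(r / (2 * γ))) :=
        aux_key (div_nonneg hr0 (by positivity))
          (div_le_div_of_nonneg_left hr0 (by positivity) (by linarith))
      have hrw : c * s ^ (-p - 1) * (Real.exp (-r / (2 * s)) * (r / 2 * (s ^ 2)⁻¹))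
          = c * s ^ (-p - 2) * (r / (2 * s) * Real.exp (-(r / (2 * s)))) := by
        have he : s ^ (-p - 1) = s ^ (-p - 2) * s := by
          rw [← Real.rpow_add_one hs.ne' (-p - 2)]
          congr 1; ring
        rw [he, neg_div]
        field_simp
      rw [hrw]
      have hstep : r / (2 * s) * Real.exp (-(r / (2 * s))) ≤ (1 + r / γ) * E := by
        refine hkey.trans ?_
        rw [hE, neg_div]
        apply mul_le_mul_of_nonneg_right _ (Real.exp_pos _).le
        have h2γ : r / (2 * γ) ≤ r / γ :=
          div_le_div_of_nonneg_left hr0 hγ (by linarith)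
        linarith
      have hX : (0:ℝ) ≤ r / (2 * s) * Real.exp (-(r / (2 * s))) :=
        mul_nonneg (div_nonneg hr0 (by positivity)) (Real.exp_pos _).le
      exact mul_le_mul (mul_le_mul_of_nonneg_left hB1 hcpos.le) hstep hX
        (by positivity)
    have hT2nn : (0:ℝ) ≤ c * s ^ (-p - 1) * (Real.exp (-r / (2 * s)) * (r / 2 * (s ^ 2)⁻¹)) := by
      have hsp := (Real.rpow_pos_of_pos hs (-p - 1)).le
      have h1 := mul_nonneg (div_nonneg hr0 zero_le_two) (inv_nonneg.mpr (sq_nonneg s))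
      have h2 := mul_nonneg (Real.exp_pos (-r / (2 * s))).le h1
      exact mul_nonneg (mul_nonneg hcpos.le hsp) h2
    have habs : ‖g' s‖ ≤ c * (p + 1) * (γt ^ (-p - 2) * E)
        + c * γt ^ (-p - 2) * ((1 + r / γ) * E) := by
      rw [hg', Real.norm_eq_abs]
      refine (abs_add_le _ _).trans ?_
      rw [abs_of_nonneg hT2nn]
      exact add_le_add hT1 hT2
    refine habs.trans ?_
    have hgoal : c * (p + 1) * (γt ^ (-p - 2) * E) + c * γt ^ (-p - 2) * ((1 + r / γ) * E)
        ≤ (p + 2) * (1 + r / γ) * (c * γt ^ (-p - 2) * E) := by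
      have hq : (0:ℝ) ≤ r / γ := div_nonneg hr0 hγ.le
      have hpos : (0:ℝ) < c * γt ^ (-p - 2) * E := by
        have := Real.rpow_pos_of_pos hγt (-p - 2); positivity
      nlinarith [mul_nonneg (mul_nonneg hpos.le (by linarith : (0:ℝ) ≤ p + 1)) hq]
    refine hgoal.trans_eq ?_
    rw [hK, ← hIdent]
    ring
  -- apply the mean value inequality
  have hmvt := (convex_Icc γt γ).norm_image_sub_le_of_norm_hasDerivWithin_le
    (fun s hs => (hderiv s hs).hasDerivWithinAt) hbound
    (Set.left_mem_Icc.mpr hle) (Set.right_mem_Icc.mpr hle)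
  calc |γ⁻¹ * D - γt⁻¹ * gaussDensity d γt z| = ‖g γ - g γt‖ := by
        rw [Real.norm_eq_abs, hD, hgeq γ hγ, hgeq γt hγt]
    _ ≤ K * ‖γ - γt‖ := hmvt
    _ = (p + 2) * (γ / γt) ^ p * ((γ - γt) / γt ^ 2) * (1 + r / γ) * D := by
        rw [Real.norm_eq_abs, abs_of_nonneg (by linarith : (0:ℝ) ≤ γ - γt), hK]
        ring
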